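/- Let λ ∈ ℝ \ {0} and let f : Ω → ℝ be a regular c_λ-convex function on a nonempty open convex set Ω ⊂ ℝ^d. Then for every u ∈ Ω, setting v = ∇^{c_λ} f(u) = ∇f(u)/(1 − λ ∇f(u)·u), one has 1 + λ u·v > 0 and the Fenchel-type identity f(u) + f^{c_λ}(v) = (1/λ)·log(1 + λ u·v), where f^{c_λ}(v) = sup_{u' ∈ Ω} { (1/λ)·log(1 + λ u'·v) − f(u') }. -/

import Mathlib

open MeasureTheory Real
open scoped RealInnerProductSpace ENNReal BigOperators

noncomputable section

/-- The negative logarithmic cost `-c_λ(u,v) = (1/λ)·log(1 + λ u·v)`, valued in `EReal`,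
with the convention `log t = -∞` for `t ≤ 0` (so that `(1/λ)·(-∞) = -∞` for `λ > 0` and
`= +∞` for `λ < 0`). -/
def negCost {d : ℕ} (lam : ℝ) (u v : EuclideanSpace ℝ (Fin d)) : EReal :=
  if 0 < 1 + lam * ⟪u, v⟫ then (((1 / lam) * Real.log (1 + lam * ⟪u, v⟫) : ℝ) : EReal)
  else if 0 < lam then ⊥ else ⊤

/-- The `c_λ`-conjugate `f^{c_λ}(v) = sup_{u ∈ Ω} { (1/λ)·log(1 + λ u·v) − f(u) }`. -/
def lamConj {d : ℕ} (lam : ℝ) (Ω : Set (EuclideanSpace ℝ (Fin d)))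
    (f : EuclideanSpace ℝ (Fin d) → ℝ) (v : EuclideanSpace ℝ (Fin d)) : EReal :=
  ⨆ u ∈ Ω, (negCost lam u v - ((f u : ℝ) : EReal))

/-- The `λ`-gradient (deformed Legendre transform) `∇^{c_λ} f(u) = ∇f(u)/(1 − λ ∇f(u)·u)`. -/
def lamGrad {d : ℕ} (lam : ℝ) (f : EuclideanSpace ℝ (Fin d) → ℝ)
    (u : EuclideanSpace ℝ (Fin d)) : EuclideanSpace ℝ (Fin d) :=
  (1 - lam * ⟪gradient f u, u⟫)⁻¹ • gradient f u

/-- A regular `c_λ`-convex function: `f` smooth on a nonempty open convex `Ω`, the Hessian of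
`F_λ = (1/λ)(e^{λ f} − 1)` strictly positive definite on `Ω`, and `1 − λ ∇f(u)·u > 0` on `Ω`. -/
def IsRegularCConvex {d : ℕ} (lam : ℝ) (Ω : Set (EuclideanSpace ℝ (Fin d)))
    (f : EuclideanSpace ℝ (Fin d) → ℝ) : Prop :=
  Ω.Nonempty ∧ IsOpen Ω ∧ Convex ℝ Ω ∧ ContDiffOn ℝ (⊤ : ℕ∞) f Ω ∧
    (∀ u ∈ Ω, ∀ w : EuclideanSpace ℝ (Fin d), w ≠ 0 →
      0 < ⟪fderiv ℝ (gradient fun z => (1 / lam) * (Real.exp (lam * f z) - 1)) u w, w⟫) ∧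
    ∀ u ∈ Ω, 0 < 1 - lam * ⟪gradient f u, u⟫


section Aux
open InnerProductSpace
variable {d : ℕ}
local notation "E" => EuclideanSpace ℝ (Fin d)

lemma inner_grad (f : E → ℝ) (x w : E) : ⟪gradient f x, w⟫ = fderiv ℝ f x w := by
  rw [← InnerProductSpace.toDual_apply_apply, gradient,
    (InnerProductSpace.toDual ℝ _).apply_symm_apply]

lemma first_order (Ω : Set E) (hΩo : IsOpen Ω) (hΩc : Convex ℝ Ω)
    (F : E → ℝ) (hF : ∀ z ∈ Ω, ContDiffAt ℝ (⊤ : ℕ∞) F z)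
    (hHess : ∀ z ∈ Ω, ∀ w : E, w ≠ 0 → 0 < ⟪fderiv ℝ (gradient F) z w, w⟫)
    {u u' : E} (hu : u ∈ Ω) (hu' : u' ∈ Ω) :
    F u + ⟪gradient F u, u' - u⟫ ≤ F u' := by
  rcases eq_or_ne u' u with rfl | hne
  · simp
  set w := u' - u with hw
  have hwne : w ≠ 0 := sub_ne_zero.mpr hne
  set γ : ℝ → E := fun t => u + t • w with hγ
  have hγ0 : γ 0 = u := by simp [hγ]
  have hγ1 : γ 1 = u' := by simp [hγ, hw]
  set S : Set ℝ := γ ⁻¹' Ω with hS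
  have hγcont : Continuous γ := by continuity
  have hSo : IsOpen S := hΩo.preimage hγcont
  have hSc : Convex ℝ S := by
    intro x hx y hy a b ha hb hab
    have h : γ (a * x + b * y) = a • γ x + b • γ y := by
      simp only [hγ]
      calc u + (a*x+b*y) • w = (a+b) • u + (a*x+b*y) • w := by rw [hab, one_smul]
        _ = a • (u + x • w) + b • (u + y • w) := by module
    show γ (a • x + b • y) ∈ Ω
    rw [smul_eq_mul, smul_eq_mul, h]
    exact hΩc hx hy ha hb hab
  have h0 : (0 : ℝ) ∈ S := by simp [hS, Set.mem_preimage, hγ0]; exact hu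
  have h1 : (1 : ℝ) ∈ S := by simp [hS, Set.mem_preimage, hγ1]; exact hu'
  have hIcc : Set.Icc (0:ℝ) 1 ⊆ S := hSc.ordConnected.out h0 h1
  have hγd : ∀ t : ℝ, HasDerivAt γ w t := by
    intro t
    exact (((hasDerivAt_id t).smul_const w).const_add u).congr_deriv (one_smul ℝ w)
  set ψ : ℝ → ℝ := fun t => ⟪gradient F (γ t), w⟫ with hψ
  have hFd : ∀ t ∈ S, DifferentiableAt ℝ F (γ t) := fun t ht =>
    (hF _ ht).differentiableAt (by simp)
  have hφd : ∀ t ∈ S, HasDerivAt (fun t => F (γ t)) (ψ t) t := by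
    intro t ht
    have h := (hFd t ht).hasFDerivAt.comp_hasDerivAt t (hγd t)
    have h2 : ψ t = fderiv ℝ F (γ t) w := inner_grad F (γ t) w
    rw [h2]; exact h
  have hgradd : ∀ t ∈ S, DifferentiableAt ℝ (gradient F) (γ t) := by
    intro t ht
    have h2 : ContDiffAt ℝ 1 (fderiv ℝ F) (γ t) :=
      (hF _ ht).fderiv_right (by norm_cast)
    exact ((InnerProductSpace.toDual ℝ _).symm.toContinuousLinearEquiv.differentiableAt).comp
      (γ t) (h2.differentiableAt one_ne_zero)
  have hψd : ∀ t ∈ S, HasDerivAt ψ ⟪fderiv ℝ (gradient F) (γ t) w, w⟫ t := by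
    intro t ht
    have h3 := ((hgradd t ht).hasFDerivAt.comp_hasDerivAt t (hγd t))
    have h4 := ((innerSL ℝ w).hasFDerivAt.comp_hasDerivAt t h3)
    have h5 : ψ = fun s => innerSL ℝ w (gradient F (γ s)) := by
      funext s
      rw [hψ]
      exact real_inner_comm _ _
    rw [h5, real_inner_comm]
    exact h4
  have hψmono : StrictMonoOn ψ S := by
    apply strictMonoOn_of_deriv_pos hSc
    · exact fun t ht => ((hψd t ht).continuousAt).continuousWithinAt
    · intro t ht
      rw [hSo.interior_eq] at ht
      rw [(hψd t ht).deriv]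
      exact hHess _ ht w hwne
  obtain ⟨c, hc, hceq⟩ := exists_hasDerivAt_eq_slope (fun t => F (γ t)) ψ (by norm_num : (0:ℝ) < 1)
    (fun t ht => ((hφd t (hIcc ht)).continuousAt).continuousWithinAt)
    (fun t ht => hφd t (hIcc (Set.mem_Icc_of_Ioo ht)))
  have hc0 : ψ 0 ≤ ψ c := (hψmono h0 (hIcc (Set.mem_Icc_of_Ioo hc)) hc.1).le
  rw [hγ0, hγ1] at hceq
  have hψ0 : ψ 0 = ⟪gradient F u, w⟫ := by simp only [hψ, hγ0]
  rw [hψ0, hceq] at hc0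
  have h6 : (F u' - F u)/(1-0) = F u' - F u := by norm_num
  rw [h6] at hc0
  linarith

lemma grad_exp (lam : ℝ) (hlam : lam ≠ 0) (f : E → ℝ) (z : E)
    (hd : DifferentiableAt ℝ f z) (w : E) :
    ⟪gradient (fun y => (1/lam) * (Real.exp (lam * f y) - 1)) z, w⟫
      = Real.exp (lam * f z) * ⟪gradient f z, w⟫ := by
  have h1 : HasFDerivAt f (fderiv ℝ f z) z := hd.hasFDerivAt
  have h2 : HasFDerivAt (fun y => lam * f y) (lam • fderiv ℝ f z) z := h1.const_mul lam
  have h3 := h2.exp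
  have h4 := (h3.sub_const 1).const_mul (1/lam)
  have h5 : (1/lam) • (Real.exp (lam * f z) • (lam • fderiv ℝ f z))
      = Real.exp (lam * f z) • fderiv ℝ f z := by
    rw [smul_smul, smul_smul]
    congr 1
    field_simp
  rw [inner_grad, h4.fderiv, h5, ContinuousLinearMap.smul_apply, smul_eq_mul, inner_grad]

end Aux

/-- For a regular `c_λ`-convex function `f` on `Ω` and `u ∈ Ω`, setting
`v = ∇^{c_λ} f(u)`, one has `1 + λ u·v > 0` and the Fenchel-type identity
`f(u) + f^{c_λ}(v) = (1/λ)·log(1 + λ u·v)`. -/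
theorem lambda_duality_fenchel_identity {d : ℕ} (lam : ℝ) (hlam : lam ≠ 0)
    (Ω : Set (EuclideanSpace ℝ (Fin d))) (f : EuclideanSpace ℝ (Fin d) → ℝ)
    (hreg : IsRegularCConvex lam Ω f)
    (u : EuclideanSpace ℝ (Fin d)) (hu : u ∈ Ω) :
    0 < 1 + lam * ⟪u, lamGrad lam f u⟫ ∧
      (f u : EReal) + lamConj lam Ω f (lamGrad lam f u)
        = (((1 / lam) * Real.log (1 + lam * ⟪u, lamGrad lam f u⟫) : ℝ) : EReal) := by
  obtain ⟨_, hΩo, hΩc, hf, hHess, hposΩ⟩ := hreg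
  have hfq : ∀ z ∈ Ω, ContDiffAt ℝ (⊤ : ℕ∞) f z := fun z hz =>
    hf.contDiffAt (hΩo.mem_nhds hz)
  have hFq : ∀ z ∈ Ω,
      ContDiffAt ℝ (⊤ : ℕ∞) (fun z => (1 / lam) * (Real.exp (lam * f z) - 1)) z := fun z hz =>
    contDiffAt_const.mul (((contDiffAt_const.mul (hfq z hz)).exp).sub contDiffAt_const)
  have hfd : ∀ z ∈ Ω, DifferentiableAt ℝ f z := fun z hz =>
    (hfq z hz).differentiableAt (by simp)
  set g := gradient f u with hg
  set t0 : ℝ := ⟪g, u⟫ with ht0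
  have hc : 0 < 1 - lam * t0 := hposΩ u hu
  set cc : ℝ := 1 - lam * t0 with hcc
  have hccne : cc ≠ 0 := ne_of_gt hc
  have hv : lamGrad lam f u = cc⁻¹ • g := rfl
  have hiuv : ⟪u, lamGrad lam f u⟫ = cc⁻¹ * t0 := by
    rw [hv, real_inner_smul_right, real_inner_comm]
  have huv : 1 + lam * ⟪u, lamGrad lam f u⟫ = cc⁻¹ := by
    rw [hiuv]
    field_simp
    rw [hcc]
    ring
  have hpos1 : 0 < 1 + lam * ⟪u, lamGrad lam f u⟫ := by
    rw [huv]; positivity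
  refine ⟨hpos1, ?_⟩
  set M : ℝ := (1 / lam) * Real.log (1 + lam * ⟪u, lamGrad lam f u⟫) - f u with hM
  have key : ∀ u' ∈ Ω,
      negCost lam u' (lamGrad lam f u) - ((f u' : ℝ) : EReal) ≤ ((M : ℝ) : EReal) := by
    intro u' hu'
    have hfo := first_order Ω hΩo hΩc (fun z => (1 / lam) * (Real.exp (lam * f z) - 1))
      hFq hHess hu hu'
    have hge := grad_exp lam hlam f u (hfd u hu) (u' - u)
    rw [hge] at hfo
    set s' : ℝ := ⟪g, u'⟫ with hs'
    have hsub : ⟪g, u' - u⟫ = s' - t0 := by rw [inner_sub_right]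
    rw [hsub] at hfo
    set E0 : ℝ := Real.exp (lam * f u) with hE0
    set E1 : ℝ := Real.exp (lam * f u') with hE1
    set A : ℝ := 1 + lam * (s' - t0) with hA
    have hE0pos : 0 < E0 := Real.exp_pos _
    have hE1pos : 0 < E1 := Real.exp_pos _
    have hEA : 0 < lam → E0 * A ≤ E1 := by
      intro hl
      have h1 : lam * ((1 / lam) * (E0 - 1) + E0 * (s' - t0)) ≤ lam * ((1 / lam) * (E1 - 1)) :=
        mul_le_mul_of_nonneg_left hfo hl.le
      have h2 : lam * ((1 / lam) * (E0 - 1)) = E0 - 1 := by field_simp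
      have h3 : lam * ((1 / lam) * (E1 - 1)) = E1 - 1 := by field_simp
      have h4 : lam * ((1 / lam) * (E0 - 1) + E0 * (s' - t0))
          = (E0 - 1) + lam * (E0 * (s' - t0)) := by rw [mul_add, h2]
      rw [h4, h3] at h1
      rw [hA]; nlinarith [h1]
    have hAE : lam < 0 → E1 ≤ E0 * A := by
      intro hl
      have h1 : lam * ((1 / lam) * (E1 - 1)) ≤ lam * ((1 / lam) * (E0 - 1) + E0 * (s' - t0)) :=
        mul_le_mul_of_nonpos_left hfo hl.le
      have h2 : lam * ((1 / lam) * (E0 - 1)) = E0 - 1 := by field_simp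
      have h3 : lam * ((1 / lam) * (E1 - 1)) = E1 - 1 := by field_simp
      have h4 : lam * ((1 / lam) * (E0 - 1) + E0 * (s' - t0))
          = (E0 - 1) + lam * (E0 * (s' - t0)) := by rw [mul_add, h2]
      rw [h4, h3] at h1
      rw [hA]; nlinarith [h1]
    have hiu'v : ⟪u', lamGrad lam f u⟫ = cc⁻¹ * s' := by
      rw [hv, real_inner_smul_right, real_inner_comm]
    have hB : 1 + lam * ⟪u', lamGrad lam f u⟫ = A / cc := by
      rw [hiu'v, hA, hcc]
      field_simp [show (1 - lam * t0) ≠ 0 from hccne]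
      ring
    by_cases hApos : 0 < A
    · have hBpos : 0 < 1 + lam * ⟪u', lamGrad lam f u⟫ := by
        rw [hB]; positivity
      rw [negCost, if_pos hBpos, ← EReal.coe_sub, EReal.coe_le_coe_iff]
      have hkey : (1 / lam) * Real.log A ≤ f u' - f u := by
        rcases lt_or_gt_of_ne hlam with hl | hl
        · have h7 := hAE hl
          have h8 : Real.log E1 ≤ Real.log (E0 * A) :=
            Real.log_le_log hE1pos h7
          rw [Real.log_mul (ne_of_gt hE0pos) (ne_of_gt hApos), hE0, hE1,
            Real.log_exp, Real.log_exp] at h8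
          have h9 : lam * (f u' - f u) ≤ Real.log A := by linarith
          have h10 : (1 / lam) * Real.log A ≤ (1 / lam) * (lam * (f u' - f u)) :=
            mul_le_mul_of_nonpos_left h9 (le_of_lt (one_div_neg.mpr hl))
          have h11 : (1 / lam) * (lam * (f u' - f u)) = f u' - f u := by field_simp
          linarith
        · have h7 := hEA hl
          have h8 : Real.log (E0 * A) ≤ Real.log E1 :=
            Real.log_le_log (by positivity) h7
          rw [Real.log_mul (ne_of_gt hE0pos) (ne_of_gt hApos), hE0, hE1,
            Real.log_exp, Real.log_exp] at h8
          have h9 : Real.log A ≤ lam * (f u' - f u) := by linarith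
          have h10 : (1 / lam) * Real.log A ≤ (1 / lam) * (lam * (f u' - f u)) :=
            mul_le_mul_of_nonneg_left h9 (le_of_lt (one_div_pos.mpr hl))
          have h11 : (1 / lam) * (lam * (f u' - f u)) = f u' - f u := by field_simp
          linarith
      rw [hB, hM, huv, Real.log_div (ne_of_gt hApos) hccne, Real.log_inv, mul_sub, mul_neg]
      linarith
    · push_neg at hApos
      have hl : 0 < lam := by
        rcases lt_or_gt_of_ne hlam with hl | hl
        · exact absurd (le_trans (hAE hl) (mul_nonpos_of_nonneg_of_nonpos hE0pos.le hApos))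
            (not_le.mpr hE1pos)
        · exact hl
      have hBn : ¬ 0 < 1 + lam * ⟪u', lamGrad lam f u⟫ := by
        rw [hB, not_lt]
        exact div_nonpos_of_nonpos_of_nonneg hApos hc.le
      rw [negCost, if_neg hBn, if_pos hl]
      rw [sub_eq_add_neg, EReal.bot_add]
      exact bot_le
  have hconj : lamConj lam Ω f (lamGrad lam f u) = ((M : ℝ) : EReal) := by
    apply le_antisymm
    · exact iSup₂_le key
    · have h1 : negCost lam u (lamGrad lam f u) - ((f u : ℝ) : EReal) = ((M : ℝ) : EReal) := by
        rw [negCost, if_pos hpos1, ← EReal.coe_sub, hM]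
      calc ((M : ℝ) : EReal) = negCost lam u (lamGrad lam f u) - ((f u : ℝ) : EReal) := h1.symm
        _ ≤ lamConj lam Ω f (lamGrad lam f u) :=
          le_iSup₂ (f := fun u' (_ : u' ∈ Ω) =>
            negCost lam u' (lamGrad lam f u) - ((f u' : ℝ) : EReal)) u hu
  rw [hconj, ← EReal.coe_add]
  exact congrArg _ (by rw [hM]; ring)
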